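/- Let x_n be a sequence of linear isomorphisms of an inner product space H such that log σ_k(x_n) − log σ_{k+1}(x_n) → ∞, x_n · E⁺_k(x_n) → E^u and E⁻_k(x_n) → E^s as n → ∞. If K is a compact subset of the Grassmannian Grass(k,H) such that every F ∈ K satisfies F ∩ E^s = {0}, then x_n · F converges to E^u uniformly over F ∈ K. -/

import Mathlib

open Module Filter

/-- The `k`-th singular value of `x` (1-indexed, decreasing). -/
noncomputable def sVal {H : Type*} [NormedAddCommGroup H] [InnerProductSpace ℝ H]
    (x : H →ₗ[ℝ] H) (k : ℕ) : ℝ :=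
  sSup {r : ℝ | 0 ≤ r ∧ ∃ F : Submodule ℝ H, finrank ℝ F = k ∧ ∀ v ∈ F, r * ‖v‖ ≤ ‖x v‖}

/-- The gap distance between two subspaces. -/
noncomputable def subDist {H : Type*} [NormedAddCommGroup H] [NormedSpace ℝ H]
    (F F' : Submodule ℝ H) : ℝ :=
  Metric.hausdorffDist ((F : Set H) ∩ Metric.closedBall 0 1)
    ((F' : Set H) ∩ Metric.closedBall 0 1)

/-- The metric topology on the set of subspaces of `H`, generated by the balls of the
gap distance. -/
instance grassTop {H : Type*} [NormedAddCommGroup H] [NormedSpace ℝ H] :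
    TopologicalSpace (Submodule ℝ H) :=
  TopologicalSpace.generateFrom
    {U | ∃ (F : Submodule ℝ H) (ε : ℝ), 0 < ε ∧ U = {F' : Submodule ℝ H | subDist F F' < ε}}

namespace StmtAux

variable {H : Type*} [NormedAddCommGroup H] [InnerProductSpace ℝ H] [FiniteDimensional ℝ H]

set_option linter.unusedSectionVars false
def BS (F : Submodule ℝ H) : Set H := (F : Set H) ∩ Metric.closedBall 0 1

lemma BS_nonempty (F : Submodule ℝ H) : (BS F).Nonempty := ⟨0, F.zero_mem, by simp⟩

lemma BS_bounded (F : Submodule ℝ H) : Bornology.IsBounded (BS F) :=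
  (Metric.isBounded_closedBall).subset Set.inter_subset_right

lemma edist_ne_top (F F' : Submodule ℝ H) :
    EMetric.hausdorffEdist (BS F) (BS F') ≠ ⊤ :=
  Metric.hausdorffEdist_ne_top_of_nonempty_of_bounded (BS_nonempty F) (BS_nonempty F')
    (BS_bounded F) (BS_bounded F')

lemma subDist_eq (F F' : Submodule ℝ H) :
    subDist F F' = Metric.hausdorffDist (BS F) (BS F') := rfl

lemma subDist_self (F : Submodule ℝ H) : subDist F F = 0 := Metric.hausdorffDist_self_zero

lemma subDist_comm (F F' : Submodule ℝ H) : subDist F F' = subDist F' F :=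
  Metric.hausdorffDist_comm

lemma subDist_triangle (F₁ F₂ F₃ : Submodule ℝ H) :
    subDist F₁ F₃ ≤ subDist F₁ F₂ + subDist F₂ F₃ :=
  Metric.hausdorffDist_triangle (edist_ne_top _ _)

lemma exists_approx {F F' : Submodule ℝ H} {r : ℝ} (h : subDist F F' < r)
    {v : H} (hv : v ∈ F) (hv1 : ‖v‖ ≤ 1) : ∃ w ∈ F', ‖w‖ ≤ 1 ∧ dist v w < r := by
  obtain ⟨w, hw, hd⟩ := Metric.exists_dist_lt_of_hausdorffDist_lt
    (show v ∈ BS F from ⟨hv, by simpa using hv1⟩) h (edist_ne_top F F')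
  exact ⟨w, hw.1, by simpa using hw.2, hd⟩

lemma subDist_le {F F' : Submodule ℝ H} {r : ℝ} (hr : 0 ≤ r)
    (h1 : ∀ v ∈ F, ‖v‖ ≤ 1 → ∃ w ∈ F', ‖w‖ ≤ 1 ∧ dist v w ≤ r)
    (h2 : ∀ w ∈ F', ‖w‖ ≤ 1 → ∃ v ∈ F, ‖v‖ ≤ 1 ∧ dist w v ≤ r) :
    subDist F F' ≤ r := by
  apply Metric.hausdorffDist_le_of_mem_dist hr
  · rintro v ⟨hv, hv1⟩
    obtain ⟨w, hw, hw1, hd⟩ := h1 v hv (by simpa using hv1)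
    exact ⟨w, ⟨hw, by simpa using hw1⟩, hd⟩
  · rintro w ⟨hw, hw1⟩
    obtain ⟨v, hv, hv1, hd⟩ := h2 w hw (by simpa using hw1)
    exact ⟨v, ⟨hv, by simpa using hv1⟩, hd⟩

lemma proj_le_dist (F : Submodule ℝ H) (v : H) {w : H} (hw : w ∈ F) :
    ‖v - Submodule.orthogonalProjectionOnto F v‖ ≤ ‖v - w‖ := by
  have horth := Submodule.starProjection_inner_eq_zero v
    (((Submodule.orthogonalProjectionOnto F v : H)) - w)
    (Submodule.sub_mem _ (Submodule.orthogonalProjectionOnto F v).2 hw)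
  rw [Submodule.starProjection_apply] at horth
  have hdecomp : v - w = (v - Submodule.orthogonalProjectionOnto F v) +
      ((Submodule.orthogonalProjectionOnto F v : H) - w) := by abel
  have hsq : ‖v - w‖ ^ 2 = ‖v - Submodule.orthogonalProjectionOnto F v‖ ^ 2 +
      ‖(Submodule.orthogonalProjectionOnto F v : H) - w‖ ^ 2 := by
    rw [hdecomp, norm_add_sq_real, horth]; ring
  nlinarith [norm_nonneg (v - w), norm_nonneg (v - (Submodule.orthogonalProjectionOnto F v : H)),
    sq_nonneg ‖(Submodule.orthogonalProjectionOnto F v : H) - w‖]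

lemma proj_norm_le (F : Submodule ℝ H) (v : H) :
    ‖(Submodule.orthogonalProjectionOnto F v : H)‖ ≤ ‖v‖ := by
  have h1 := (Submodule.orthogonalProjectionOnto F).le_opNorm v
  have h2 := Submodule.orthogonalProjectionOnto_norm_le F
  have h3 : ‖(Submodule.orthogonalProjectionOnto F v : H)‖ = ‖Submodule.orthogonalProjectionOnto F v‖ := rfl
  nlinarith [norm_nonneg v]

lemma sub_proj_norm_le (F : Submodule ℝ H) (v : H) :
    ‖v - Submodule.orthogonalProjectionOnto F v‖ ≤ ‖v‖ := by
  simpa using proj_le_dist F v F.zero_mem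

end StmtAux

namespace StmtAux

set_option linter.unusedSectionVars false

variable {H : Type*} [NormedAddCommGroup H] [InnerProductSpace ℝ H] [FiniteDimensional ℝ H]

lemma exists_unit {F : Submodule ℝ H} (h : F ≠ ⊥) : ∃ v ∈ F, ‖v‖ = 1 := by
  obtain ⟨v, hv, hv0⟩ := Submodule.exists_mem_ne_zero_of_ne_bot h
  have hn : ‖v‖ ≠ 0 := norm_ne_zero_iff.2 hv0
  exact ⟨‖v‖⁻¹ • v, F.smul_mem _ hv, by
    rw [norm_smul, norm_inv, norm_norm]; field_simp⟩

lemma proj_surj {F₁ F₂ : Submodule ℝ H} (hrk : finrank ℝ F₁ = finrank ℝ F₂)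
    {δ : ℝ} (hδ1 : δ < 1)
    (h : ∀ v ∈ F₁, ‖v - Submodule.orthogonalProjectionOnto F₂ v‖ ≤ δ * ‖v‖) :
    ∀ w ∈ F₂, ∃ v ∈ F₁, (Submodule.orthogonalProjectionOnto F₂ v : H) = w := by
  set φ : F₁ →ₗ[ℝ] F₂ := (Submodule.orthogonalProjectionOnto F₂ : H →L[ℝ] F₂).toLinearMap.comp F₁.subtype
    with hφ
  have hinj : Function.Injective φ := by
    rw [← LinearMap.ker_eq_bot, LinearMap.ker_eq_bot']
    intro m hm
    have hm' : (Submodule.orthogonalProjectionOnto F₂ (m : H) : H) = 0 := by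
      have : φ m = 0 := hm
      simpa [hφ] using congrArg (Subtype.val) this
    have h1 := h (m : H) m.2
    rw [hm', sub_zero] at h1
    have h2 : ‖(m : H)‖ = 0 := by nlinarith [norm_nonneg (m : H)]
    exact Subtype.ext (norm_eq_zero.1 h2)
  have hsurj : Function.Surjective φ := by
    rw [← LinearMap.range_eq_top]
    apply Submodule.eq_top_of_finrank_eq
    rw [LinearMap.finrank_range_of_inj hinj]
    exact hrk
  intro w hw
  obtain ⟨m, hm⟩ := hsurj ⟨w, hw⟩
  refine ⟨(m : H), m.2, ?_⟩
  simpa [hφ] using congrArg (Subtype.val) hm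

/-- If the orthogonal projection to `F₂` moves points of `F₁` by at most `δ`-fraction,
and the spaces have equal dimension, then the gap distance is at most `2δ/(1-δ)`. -/
lemma subDist_le_of_proj {F₁ F₂ : Submodule ℝ H} (hrk : finrank ℝ F₁ = finrank ℝ F₂)
    {δ : ℝ} (hδ0 : 0 ≤ δ) (hδ1 : δ < 1)
    (h : ∀ v ∈ F₁, ‖v - Submodule.orthogonalProjectionOnto F₂ v‖ ≤ δ * ‖v‖) :
    subDist F₁ F₂ ≤ 2 * δ / (1 - δ) := by
  have hpos : 0 < 1 - δ := by linarith
  have hkey : 0 ≤ 2 * δ / (1 - δ) := by positivity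
  apply subDist_le hkey
  · intro v hv hv1
    refine ⟨Submodule.orthogonalProjectionOnto F₂ v, (Submodule.orthogonalProjectionOnto F₂ v).2,
      le_trans (proj_norm_le F₂ v) hv1, ?_⟩
    rw [dist_eq_norm]
    have h1 := h v hv
    have h2 : δ * ‖v‖ ≤ 2 * δ / (1 - δ) := by
      rw [le_div_iff₀ hpos]
      nlinarith [norm_nonneg v, mul_nonneg (mul_nonneg hδ0 (by linarith : (0:ℝ) ≤ 1 - δ)) (by linarith : (0:ℝ) ≤ 1 - ‖v‖), mul_nonneg hδ0 hδ0]
    linarith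
  · intro w hw hw1
    obtain ⟨v, hv, hveq⟩ := proj_surj hrk hδ1 h w hw
    have h1 := h v hv
    rw [hveq] at h1
    have hnorm : ‖v‖ - ‖w‖ ≤ ‖v - w‖ := by
      simpa using norm_sub_norm_le v w
    have hnm : (1 - δ) * ‖v‖ ≤ ‖w‖ := by nlinarith
    refine ⟨(1 - δ) • v, F₁.smul_mem _ hv, ?_, ?_⟩
    · rw [norm_smul, Real.norm_eq_abs, abs_of_pos hpos]
      linarith
    · rw [dist_eq_norm]
      have heq : w - (1 - δ) • v = (w - v) + δ • v := by
        rw [sub_smul, one_smul]; abel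
      rw [heq]
      have h2 : ‖(w - v) + δ • v‖ ≤ ‖w - v‖ + δ * ‖v‖ := by
        refine le_trans (norm_add_le _ _) ?_
        rw [norm_smul, Real.norm_eq_abs, abs_of_nonneg hδ0]
      have h3 : ‖w - v‖ ≤ δ * ‖v‖ := by rw [norm_sub_rev]; exact h1
      have h4 : δ * ‖v‖ ≤ δ / (1 - δ) := by
        rw [le_div_iff₀ hpos]
        nlinarith
      have h5 : 2 * δ / (1 - δ) = δ / (1 - δ) + δ / (1 - δ) := by ring
      linarith

end StmtAux

namespace StmtAux

set_option linter.unusedSectionVars false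

variable {H : Type*} [NormedAddCommGroup H] [InnerProductSpace ℝ H] [FiniteDimensional ℝ H]

lemma sVal_nonneg (x : H →ₗ[ℝ] H) (k : ℕ) : 0 ≤ sVal x k := by
  rw [sVal]
  set S := {r : ℝ | 0 ≤ r ∧ ∃ F : Submodule ℝ H, finrank ℝ F = k ∧ ∀ v ∈ F, r * ‖v‖ ≤ ‖x v‖}
    with hS
  rcases S.eq_empty_or_nonempty with h | h
  · rw [h, Real.sSup_empty]
  · by_cases hb : BddAbove S
    · obtain ⟨r, hr⟩ := h
      exact le_trans hr.1 (le_csSup hb hr)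
    · rw [Real.sSup_of_not_bddAbove hb]

lemma sVal_pos (x : H ≃ₗ[ℝ] H) {k : ℕ} (hk : 1 ≤ k) (F₀ : Submodule ℝ H)
    (hF₀ : finrank ℝ F₀ = k) : 0 < sVal (x : H →ₗ[ℝ] H) k := by
  have hF₀bot : F₀ ≠ ⊥ := by
    intro hbot
    rw [hbot, finrank_bot] at hF₀
    omega
  obtain ⟨v₀, hv₀F, hv₀⟩ := exists_unit hF₀bot
  set yc : H →L[ℝ] H := LinearMap.toContinuousLinearMap (x.symm : H →ₗ[ℝ] H) with hyc
  set xc : H →L[ℝ] H := LinearMap.toContinuousLinearMap (x : H →ₗ[ℝ] H) with hxc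
  have hyc0 : yc ≠ 0 := by
    intro h0
    have h1 : yc ((x : H →ₗ[ℝ] H) v₀) = v₀ := by
      simp [hyc, LinearMap.coe_toContinuousLinearMap']
    rw [h0] at h1
    simp at h1
    rw [← h1] at hv₀
    simp at hv₀
  have hC : 0 < ‖yc‖ := norm_pos_iff.2 hyc0
  have hmem : ‖yc‖⁻¹ ∈ {r : ℝ | 0 ≤ r ∧ ∃ F : Submodule ℝ H, finrank ℝ F = k ∧
      ∀ v ∈ F, r * ‖v‖ ≤ ‖(x : H →ₗ[ℝ] H) v‖} := by
    refine ⟨by positivity, F₀, hF₀, ?_⟩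
    intro v _
    have h1 : ‖v‖ ≤ ‖yc‖ * ‖x v‖ := by
      have h2 : yc ((x : H →ₗ[ℝ] H) v) = v := by
        simp [hyc, LinearMap.coe_toContinuousLinearMap']
      calc ‖v‖ = ‖yc ((x : H →ₗ[ℝ] H) v)‖ := by rw [h2]
        _ ≤ ‖yc‖ * ‖(x : H →ₗ[ℝ] H) v‖ := yc.le_opNorm _
    calc ‖yc‖⁻¹ * ‖v‖ ≤ ‖yc‖⁻¹ * (‖yc‖ * ‖(x : H →ₗ[ℝ] H) v‖) := by
          apply mul_le_mul_of_nonneg_left _ (by positivity)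
          exact h1
      _ = ‖(x : H →ₗ[ℝ] H) v‖ := by field_simp
  have hbdd : BddAbove {r : ℝ | 0 ≤ r ∧ ∃ F : Submodule ℝ H, finrank ℝ F = k ∧
      ∀ v ∈ F, r * ‖v‖ ≤ ‖(x : H →ₗ[ℝ] H) v‖} := by
    refine ⟨‖xc‖, ?_⟩
    rintro r ⟨hr0, F, hFrk, hF⟩
    have hFbot : F ≠ ⊥ := by
      intro hbot
      rw [hbot, finrank_bot] at hFrk
      omega
    obtain ⟨u, huF, hu⟩ := exists_unit hFbot
    have h1 := hF u huF
    rw [hu, mul_one] at h1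
    calc r ≤ ‖(x : H →ₗ[ℝ] H) u‖ := h1
      _ = ‖xc u‖ := by rw [hxc]; simp [LinearMap.coe_toContinuousLinearMap']
      _ ≤ ‖xc‖ * ‖u‖ := xc.le_opNorm _
      _ = ‖xc‖ := by rw [hu, mul_one]
  have := le_csSup hbdd hmem
  rw [sVal]
  calc (0:ℝ) < ‖yc‖⁻¹ := by positivity
    _ ≤ _ := this

lemma le_mul_of_loggap {a b d : ℝ} (ha : 0 < a) (hb : 0 ≤ b) (hd : 0 < d)
    (h : Real.log (1 / d) < Real.log a - Real.log b) : b ≤ d * a := by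
  rcases eq_or_lt_of_le hb with hb0 | hb0
  · nlinarith
  · have h1 : Real.log a - Real.log b = Real.log (a / b) :=
      (Real.log_div ha.ne' hb0.ne').symm
    rw [h1] at h
    have h2 : 1 / d < a / b := by
      rw [← Real.exp_log (by positivity : (0:ℝ) < 1 / d),
        ← Real.exp_log (by positivity : (0:ℝ) < a / b)]
      exact Real.exp_lt_exp.2 h
    rw [div_lt_div_iff₀ (by positivity) hb0] at h2
    nlinarith

end StmtAux

namespace StmtAux

set_option linter.unusedSectionVars false

variable {H : Type*} [NormedAddCommGroup H] [InnerProductSpace ℝ H] [FiniteDimensional ℝ H]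

lemma ball_open (F₀ : Submodule ℝ H) {ε : ℝ} (hε : 0 < ε) :
    IsOpen {F' : Submodule ℝ H | subDist F₀ F' < ε} :=
  TopologicalSpace.isOpen_generateFrom_of_mem ⟨F₀, ε, hε, rfl⟩

lemma sphere_compact (F : Submodule ℝ H) :
    IsCompact ((F : Set H) ∩ Metric.sphere 0 1) := by
  apply Metric.isCompact_of_isClosed_isBounded
  · exact (Submodule.closed_of_finiteDimensional F).inter Metric.isClosed_sphere
  · exact Metric.isBounded_sphere.subset Set.inter_subset_right

lemma exists_unif_trans (Es : Submodule ℝ H) (K : Set (Submodule ℝ H)) (hK : IsCompact K)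
    (htrans : ∀ F ∈ K, F ⊓ Es = ⊥) :
    ∃ c : ℝ, 0 < c ∧ c ≤ 1 ∧ ∀ F ∈ K, ∀ v ∈ F, ‖v‖ = 1 → c ≤ Metric.infDist v (Es : Set H) := by
  classical
  set U : ℕ → Set (Submodule ℝ H) :=
    fun m => {F | ∀ v ∈ F, ‖v‖ = 1 → 1 / (m + 1 : ℝ) < Metric.infDist v (Es : Set H)} with hU
  have hEsclosed : IsClosed (Es : Set H) := Submodule.closed_of_finiteDimensional Es
  have hkey : ∀ m : ℕ, ∀ F ∈ U m, ∃ η : ℝ, 0 < η ∧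
      ∀ F', subDist F F' < η → F' ∈ U m := by
    intro m F hF
    by_cases hbot : F = ⊥
    · refine ⟨1/2, by norm_num, ?_⟩
      intro F' hd v hv hv1
      exfalso
      rw [subDist_comm] at hd
      obtain ⟨w, hwF, hw1, hdw⟩ := exists_approx hd hv hv1.le
      rw [hbot, Submodule.mem_bot] at hwF
      rw [hwF, dist_zero_right, hv1] at hdw
      norm_num at hdw
    · obtain ⟨v₀, hv₀F, hv₀⟩ := exists_unit hbot
      have hSpc := sphere_compact F
      have hSpne : ((F : Set H) ∩ Metric.sphere 0 1).Nonempty :=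
        ⟨v₀, hv₀F, by simpa using hv₀⟩
      obtain ⟨vm, hvm, hmin₀⟩ := hSpc.exists_isMinOn hSpne
        ((Metric.continuous_infDist_pt (Es : Set H)).continuousOn)
      have hmin : ∀ y ∈ (F : Set H) ∩ Metric.sphere 0 1,
          Metric.infDist vm (Es : Set H) ≤ Metric.infDist y (Es : Set H) :=
        fun y hy => hmin₀ hy
      have hvmF : vm ∈ F := hvm.1
      have hvm1 : ‖vm‖ = 1 := by simpa using hvm.2
      set cF := Metric.infDist vm (Es : Set H) with hcF
      have hcFgt : 1 / (m + 1 : ℝ) < cF := hF vm hvmF hvm1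
      set η := (cF - 1 / (m + 1 : ℝ)) / 3 with hη
      have hm0 : (0:ℝ) < 1 / (m + 1 : ℝ) := by positivity
      have hη0 : 0 < η := by rw [hη]; linarith
      have hcF1 : cF ≤ 1 := by
        calc cF ≤ dist vm 0 := Metric.infDist_le_dist_of_mem Es.zero_mem
          _ = 1 := by rw [dist_zero_right, hvm1]
      have hη3 : η ≤ 1/3 := by rw [hη]; linarith
      refine ⟨η, hη0, ?_⟩
      intro F' hd v hv hv1
      rw [subDist_comm] at hd
      obtain ⟨w, hwF, hw1, hdw⟩ := exists_approx hd hv hv1.le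
      rw [dist_eq_norm] at hdw
      have hnsub : ‖v‖ - ‖w‖ ≤ ‖v - w‖ := by simpa using norm_sub_norm_le v w
      have hwn : 1 - η ≤ ‖w‖ := by rw [hv1] at hnsub; linarith
      have hw0 : w ≠ 0 := by
        intro h0; rw [h0, norm_zero] at hwn; linarith
      have hwpos : 0 < ‖w‖ := by linarith
      set u := ‖w‖⁻¹ • w with hu
      have huF : u ∈ F := F.smul_mem _ hwF
      have hu1 : ‖u‖ = 1 := by
        rw [hu, norm_smul, norm_inv, norm_norm]
        field_simp
      have hmin' : cF ≤ Metric.infDist u (Es : Set H) :=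
        hmin u ⟨huF, by simpa using hu1⟩
      have huw : ‖u - w‖ ≤ η := by
        have heq : u - w = (‖w‖⁻¹ - 1) • w := by rw [hu, sub_smul, one_smul]
        have hinv : 1 ≤ ‖w‖⁻¹ := by
          rw [le_inv_comm₀ one_pos hwpos]; simpa using hw1
        rw [heq, norm_smul, Real.norm_eq_abs, abs_of_nonneg (by linarith)]
        have : (‖w‖⁻¹ - 1) * ‖w‖ = 1 - ‖w‖ := by field_simp
        rw [this]; linarith
      have hlip : Metric.infDist u (Es : Set H) ≤ Metric.infDist v (Es : Set H) + dist u v :=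
        Metric.infDist_le_infDist_add_dist
      have hduv : dist u v ≤ 2 * η := by
        calc dist u v ≤ dist u w + dist w v := dist_triangle u w v
          _ ≤ η + η := by
              rw [dist_eq_norm, dist_eq_norm, norm_sub_rev w v]
              exact add_le_add huw hdw.le
          _ = 2 * η := by ring
      have hval : 1 / (m + 1 : ℝ) = cF - 3 * η := by rw [hη]; ring
      linarith
  have hUopen : ∀ m, IsOpen (U m) := by
    intro m
    have hrepr : U m = ⋃₀ {B : Set (Submodule ℝ H) |
        (∃ F₀ ε, 0 < ε ∧ B = {F' | subDist F₀ F' < ε}) ∧ B ⊆ U m} := by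
      apply Set.Subset.antisymm
      · intro F hF
        obtain ⟨η, hη0, hη⟩ := hkey m F hF
        refine ⟨{F' | subDist F F' < η}, ⟨⟨F, η, hη0, rfl⟩, fun F' hF' => hη F' hF'⟩, ?_⟩
        show subDist F F < η
        rw [subDist_self]; exact hη0
      · rintro F ⟨B, ⟨-, hBU⟩, hFB⟩
        exact hBU hFB
    rw [hrepr]
    apply isOpen_sUnion
    rintro B ⟨⟨F₀, ε, hε, rfl⟩, -⟩
    exact ball_open F₀ hε
  have hcover : K ⊆ ⋃ m, U m := by
    intro F hF
    by_cases hbot : F = ⊥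
    · refine Set.mem_iUnion.2 ⟨0, ?_⟩
      intro v hv hv1
      exfalso
      rw [hbot, Submodule.mem_bot] at hv
      rw [hv, norm_zero] at hv1
      norm_num at hv1
    · obtain ⟨v₀, hv₀F, hv₀⟩ := exists_unit hbot
      have hSpc := sphere_compact F
      have hSpne : ((F : Set H) ∩ Metric.sphere 0 1).Nonempty :=
        ⟨v₀, hv₀F, by simpa using hv₀⟩
      obtain ⟨vm, hvm, hmin₀⟩ := hSpc.exists_isMinOn hSpne
        ((Metric.continuous_infDist_pt (Es : Set H)).continuousOn)
      have hmin : ∀ y ∈ (F : Set H) ∩ Metric.sphere 0 1,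
          Metric.infDist vm (Es : Set H) ≤ Metric.infDist y (Es : Set H) :=
        fun y hy => hmin₀ hy
      have hvmF : vm ∈ F := hvm.1
      have hvm1 : ‖vm‖ = 1 := by simpa using hvm.2
      have hnotmem : vm ∉ (Es : Set H) := by
        intro hmem
        have : vm ∈ F ⊓ Es := Submodule.mem_inf.2 ⟨hvmF, hmem⟩
        rw [htrans F hF, Submodule.mem_bot] at this
        rw [this, norm_zero] at hvm1
        norm_num at hvm1
      have hpos : 0 < Metric.infDist vm (Es : Set H) :=
        (hEsclosed.notMem_iff_infDist_pos ⟨0, Es.zero_mem⟩).1 hnotmem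
      obtain ⟨m, hm⟩ := exists_nat_one_div_lt hpos
      refine Set.mem_iUnion.2 ⟨m, ?_⟩
      intro v hv hv1
      exact lt_of_lt_of_le hm (hmin v ⟨hv, by simpa using hv1⟩)
  obtain ⟨t, ht⟩ := hK.elim_finite_subcover U hUopen hcover
  set M := t.sup id with hM
  have hKM : K ⊆ U M := by
    intro F hF
    obtain ⟨m, hm, hFm⟩ := Set.mem_iUnion₂.1 (ht hF)
    intro v hv hv1
    have h1 := hFm v hv hv1
    have hmM : (m:ℝ) ≤ (M:ℝ) := Nat.cast_le.2 (Finset.le_sup (f := id) hm)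
    have h2 : 1/((M:ℝ)+1) ≤ 1/((m:ℝ)+1) := by
      apply one_div_le_one_div_of_le
      · positivity
      · linarith
    linarith
  refine ⟨1/((M:ℝ)+1), by positivity, ?_, ?_⟩
  · rw [div_le_one (by positivity)]
    linarith [Nat.cast_nonneg (α := ℝ) M]
  · intro F hF v hv hv1
    exact (hKM hF v hv hv1).le

end StmtAux


open StmtAux in
set_option maxHeartbeats 2000000 in
/-- If `log σ_k(x_n) − log σ_{k+1}(x_n) → ∞`, `x_n · E⁺_k(x_n) → E^u` and
`E⁻_k(x_n) = E⁺_k(x_n)ᗮ → E^s`, then for any compact set `K` of `k`-planes transverse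
to `E^s`, `x_n · F → E^u` uniformly over `F ∈ K`. -/
theorem stmt8 {H : Type*} [NormedAddCommGroup H] [InnerProductSpace ℝ H]
    [FiniteDimensional ℝ H] (k : ℕ)
    (x : ℕ → (H ≃ₗ[ℝ] H)) (E : ℕ → Submodule ℝ H)
    (hEdim : ∀ n, finrank ℝ (E n) = k)
    -- `E n` is the space `E⁺_k(x n)` spanned by the eigenvectors of `(x n)*(x n)`
    -- with eigenvalue at least `σ_k(x n)²`, and `(E n)ᗮ = E⁻_k(x n)`:
    (hEplus : ∀ n, ∀ v ∈ E n, sVal (x n).toLinearMap k * ‖v‖ ≤ ‖x n v‖)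
    (hEminus : ∀ n, ∀ v ∈ (E n)ᗮ, ‖x n v‖ ≤ sVal (x n).toLinearMap (k + 1) * ‖v‖)
    (hgap : Tendsto (fun n => Real.log (sVal (x n).toLinearMap k)
              - Real.log (sVal (x n).toLinearMap (k + 1))) atTop atTop)
    (Eu Es : Submodule ℝ H)
    (hEu : Tendsto (fun n => subDist (Submodule.map (x n).toLinearMap (E n)) Eu) atTop (nhds 0))
    (hEs : Tendsto (fun n => subDist ((E n)ᗮ) Es) atTop (nhds 0))
    (K : Set (Submodule ℝ H)) (hKcpt : IsCompact K)
    (hKdim : ∀ F ∈ K, finrank ℝ F = k)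
    (hKtrans : ∀ F ∈ K, F ⊓ Es = ⊥) :
    ∀ ε : ℝ, 0 < ε → ∃ N : ℕ, ∀ n ≥ N, ∀ F ∈ K,
      subDist (Submodule.map (x n).toLinearMap F) Eu < ε := by
  rcases Nat.eq_zero_or_pos k with hk0 | hk
  · subst hk0
    intro ε hε
    have hE : ∀ n, E n = ⊥ := fun n => Submodule.finrank_eq_zero.1 (hEdim n)
    have hconst : Tendsto (fun _ : ℕ => subDist (⊥ : Submodule ℝ H) Eu) atTop (nhds 0) := by
      have h := hEu
      simp only [hE, Submodule.map_bot] at h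
      exact h
    have h0 : subDist (⊥ : Submodule ℝ H) Eu = 0 :=
      (tendsto_nhds_unique hconst tendsto_const_nhds).symm
    refine ⟨0, fun n _ F hF => ?_⟩
    have hFbot : F = ⊥ := Submodule.finrank_eq_zero.1 (hKdim F hF)
    rw [hFbot, Submodule.map_bot, h0]
    exact hε
  · intro ε hε
    obtain ⟨c, hc0, hc1, hcK⟩ := exists_unif_trans Es K hKcpt hKtrans
    set δb : ℝ := min (1/2) (ε/16) with hδbdef
    have hδb0 : 0 < δb := lt_min (by norm_num) (by linarith)
    have hδbhalf : δb ≤ 1/2 := min_le_left _ _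
    have hδbε : δb ≤ ε/16 := min_le_right _ _
    set d : ℝ := (c/4) * δb with hddef
    have hd0 : 0 < d := by positivity
    have h1 : ∀ᶠ n in atTop, subDist ((E n)ᗮ) Es < c/2 :=
      hEs.eventually_lt_const (by positivity)
    have h2 : ∀ᶠ n in atTop, subDist (Submodule.map (x n).toLinearMap (E n)) Eu < ε/2 :=
      hEu.eventually_lt_const (by linarith)
    have h3 : ∀ᶠ n in atTop, Real.log (1/d) <
        Real.log (sVal (x n).toLinearMap k) - Real.log (sVal (x n).toLinearMap (k+1)) :=
      hgap.eventually_gt_atTop _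
    obtain ⟨N, hN⟩ := eventually_atTop.1 ((h1.and h2).and h3)
    refine ⟨N, fun n hn F hF => ?_⟩
    obtain ⟨⟨e1, e2⟩, e3⟩ := hN n hn
    set s1 := sVal (x n).toLinearMap k with hs1def
    set s2 := sVal (x n).toLinearMap (k+1) with hs2def
    have hs1 : 0 < s1 := sVal_pos (x n) hk (E n) (hEdim n)
    have hs2 : 0 ≤ s2 := sVal_nonneg _ _
    have hratio : s2 ≤ d * s1 := le_mul_of_loggap hs1 hs2 hd0 e3
    have hs1' : s1 ≠ 0 := ne_of_gt hs1
    have hc' : c ≠ 0 := ne_of_gt hc0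
    have hdle : d ≤ c/8 := by
      rw [hddef]
      nlinarith [mul_le_mul_of_nonneg_left hδbhalf (by linarith : (0:ℝ) ≤ c/4)]
    have hratio' : s2 ≤ (c/8) * s1 :=
      le_trans hratio (mul_le_mul_of_nonneg_right hdle hs1.le)
    have hA : ∀ v ∈ F, ‖v‖ = 1 → c/2 ≤ ‖(Submodule.orthogonalProjectionOnto (E n) v : H)‖ := by
      intro v hv hv1
      have hbmem : v - Submodule.orthogonalProjectionOnto (E n) v ∈ (E n)ᗮ :=
        Submodule.sub_starProjection_mem_orthogonal v
      have hbn : ‖v - (Submodule.orthogonalProjectionOnto (E n) v : H)‖ ≤ 1 := by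
        have h' := sub_proj_norm_le (E n) v
        rw [hv1] at h'
        exact h'
      obtain ⟨s, hsmem, hsn, hds⟩ := exists_approx e1 hbmem hbn
      have hinf : c ≤ Metric.infDist v (Es : Set H) := hcK F hF v hv hv1
      have hle1 : Metric.infDist v (Es : Set H) ≤ dist v s :=
        Metric.infDist_le_dist_of_mem hsmem
      have hle2 : dist v s ≤ ‖(Submodule.orthogonalProjectionOnto (E n) v : H)‖ +
          dist (v - Submodule.orthogonalProjectionOnto (E n) v) s := by
        rw [dist_eq_norm, dist_eq_norm]
        have heq : v - s = (Submodule.orthogonalProjectionOnto (E n) v : H) +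
            ((v - Submodule.orthogonalProjectionOnto (E n) v) - s) := by abel
        rw [heq]
        exact norm_add_le _ _
      linarith
    have hA' : ∀ v ∈ F, (c/2) * ‖v‖ ≤ ‖(Submodule.orthogonalProjectionOnto (E n) v : H)‖ := by
      intro v hv
      rcases eq_or_ne v 0 with rfl | hv0
      · simp
      · have hnv : ‖v‖ ≠ 0 := norm_ne_zero_iff.2 hv0
        have hu := hA (‖v‖⁻¹ • v) (F.smul_mem _ hv)
          (by rw [norm_smul, norm_inv, norm_norm]; field_simp)
        have hPsmul : (Submodule.orthogonalProjectionOnto (E n) (‖v‖⁻¹ • v) : H)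
            = ‖v‖⁻¹ • (Submodule.orthogonalProjectionOnto (E n) v : H) := by
          rw [map_smul]; rfl
        rw [hPsmul, norm_smul, norm_inv, norm_norm] at hu
        calc (c/2) * ‖v‖ = ‖v‖ * (c/2) := by ring
          _ ≤ ‖v‖ * (‖v‖⁻¹ * ‖(Submodule.orthogonalProjectionOnto (E n) v : H)‖) :=
              mul_le_mul_of_nonneg_left hu (norm_nonneg v)
          _ = ‖(Submodule.orthogonalProjectionOnto (E n) v : H)‖ := by field_simp
    have hB : ∀ v ∈ F, ‖x n v - x n (Submodule.orthogonalProjectionOnto (E n) v : H)‖ ≤ s2 * ‖v‖ := by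
      intro v hv
      have hbmem : v - Submodule.orthogonalProjectionOnto (E n) v ∈ (E n)ᗮ :=
        Submodule.sub_starProjection_mem_orthogonal v
      have h1' := hEminus n _ hbmem
      have heq : x n v - x n (Submodule.orthogonalProjectionOnto (E n) v : H)
          = x n (v - (Submodule.orthogonalProjectionOnto (E n) v : H)) := by rw [map_sub]
      rw [heq]
      exact le_trans h1' (mul_le_mul_of_nonneg_left (sub_proj_norm_le (E n) v) hs2)
    have hC : ∀ v ∈ F, (s1 * (c/4)) * ‖v‖ ≤ ‖x n v‖ := by
      intro v hv
      have hP1 := hEplus n _ (Submodule.orthogonalProjectionOnto (E n) v).2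
      have hB' := hB v hv
      have hA'' := hA' v hv
      have htr : ‖x n (Submodule.orthogonalProjectionOnto (E n) v : H)‖ - ‖x n v‖ ≤
          ‖x n v - x n (Submodule.orthogonalProjectionOnto (E n) v : H)‖ := by
        rw [norm_sub_rev]
        simpa using norm_sub_norm_le (x n (Submodule.orthogonalProjectionOnto (E n) v : H)) (x n v)
      nlinarith [norm_nonneg v, mul_le_mul_of_nonneg_left hA'' (le_of_lt hs1),
        mul_le_mul_of_nonneg_right hratio' (norm_nonneg v)]
    set δ : ℝ := 4 * s2 / (s1 * c) with hδdef
    have hδ0 : 0 ≤ δ := by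
      rw [hδdef]
      exact div_nonneg (by linarith) (le_of_lt (mul_pos hs1 hc0))
    have hδle : δ ≤ δb := by
      rw [hδdef, div_le_iff₀ (mul_pos hs1 hc0)]
      have h7 : s2 ≤ (c/4) * δb * s1 := by
        rw [hddef] at hratio
        linarith
      nlinarith [h7]
    have hδ1 : δ < 1 := lt_of_le_of_lt (hδle.trans hδbhalf) (by norm_num)
    have hproj : ∀ u ∈ Submodule.map (x n).toLinearMap F,
        ‖u - Submodule.orthogonalProjectionOnto (Submodule.map (x n).toLinearMap (E n)) u‖ ≤ δ * ‖u‖ := by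
      rintro u ⟨v, hv, rfl⟩
      show ‖x n v - (Submodule.orthogonalProjectionOnto (Submodule.map (x n).toLinearMap (E n)) (x n v) : H)‖
        ≤ δ * ‖x n v‖
      have hmem : x n (Submodule.orthogonalProjectionOnto (E n) v : H) ∈
          Submodule.map (x n).toLinearMap (E n) :=
        ⟨_, (Submodule.orthogonalProjectionOnto (E n) v).2, rfl⟩
      have hle := proj_le_dist (Submodule.map (x n).toLinearMap (E n)) (x n v) hmem
      have hB' := hB v hv
      have hC' := hC v hv
      have key : s2 * ‖v‖ ≤ δ * ‖x n v‖ := by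
        have h5 : δ * ((s1 * (c/4)) * ‖v‖) ≤ δ * ‖x n v‖ :=
          mul_le_mul_of_nonneg_left hC' hδ0
        have h6 : δ * ((s1 * (c/4)) * ‖v‖) = s2 * ‖v‖ := by
          rw [hδdef]
          field_simp
        linarith
      calc ‖x n v - (Submodule.orthogonalProjectionOnto (Submodule.map (x n).toLinearMap (E n)) (x n v) : H)‖
          ≤ ‖x n v - x n (Submodule.orthogonalProjectionOnto (E n) v : H)‖ := hle
        _ ≤ s2 * ‖v‖ := hB'
        _ ≤ δ * ‖x n v‖ := key
    have hrk : finrank ℝ (Submodule.map (x n).toLinearMap F)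
        = finrank ℝ (Submodule.map (x n).toLinearMap (E n)) := by
      rw [LinearEquiv.finrank_map_eq, LinearEquiv.finrank_map_eq, hKdim F hF, hEdim n]
    have hsub := subDist_le_of_proj hrk hδ0 hδ1 hproj
    have hδhalf : δ ≤ 1/2 := hδle.trans hδbhalf
    have hfinal : 2 * δ / (1 - δ) ≤ 4 * δ := by
      rw [div_le_iff₀ (by linarith : (0:ℝ) < 1 - δ)]
      nlinarith [mul_nonneg hδ0 (by linarith : (0:ℝ) ≤ 1 - 2*δ)]
    have htri := subDist_triangle (Submodule.map (x n).toLinearMap F)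
      (Submodule.map (x n).toLinearMap (E n)) Eu
    have h4δ : 4 * δ ≤ ε/4 := by linarith
    linarith
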